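/- Let f : ℝ_{>0}^n → ℝ, f(x) = ∑_{μ ∈ σ(f)} c_μ x^μ be a signomial. Assume there exists v ∈ ℝ^n such that σ(f) ⊆ N(f)_v ∪ N(f)_{-v}, and that both f|_{N(f)_v}^{-1}(ℝ_{<0}) and f|_{N(f)_{-v}}^{-1}(ℝ_{<0}) have exactly one connected component. If there exist negative exponent vectors β₁ ∈ σ_-(f) ∩ N(f)_v and β₂ ∈ σ_-(f) ∩ N(f)_{-v} such that Conv({β₁, β₂}) is an edge of N(f), then f^{-1}(ℝ_{<0}) has exactly one connected component. -/

import Mathlib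

open Finset

/-- The signomial `x ↦ ∑_{μ ∈ S} c μ * x^μ` (with real exponents, via `Real.rpow`). -/
noncomputable def sig {n : ℕ} (S : Finset (Fin n → ℝ)) (c : (Fin n → ℝ) → ℝ)
    (x : Fin n → ℝ) : ℝ :=
  ∑ μ ∈ S, c μ * ∏ i, x i ^ μ i

open Classical in
/-- The restriction `f|_F` of the signomial to a subset `F ⊆ ℝⁿ` of exponent vectors. -/
noncomputable def sigOn {n : ℕ} (S : Finset (Fin n → ℝ)) (c : (Fin n → ℝ) → ℝ)
    (F : Set (Fin n → ℝ)) (x : Fin n → ℝ) : ℝ :=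
  ∑ μ ∈ S, if μ ∈ F then c μ * ∏ i, x i ^ μ i else 0

/-- `f⁻¹(ℝ_{<0})`: the points of the positive orthant where the signomial is negative. -/
def negSet {n : ℕ} (S : Finset (Fin n → ℝ)) (c : (Fin n → ℝ) → ℝ) : Set (Fin n → ℝ) :=
  {x | (∀ i, 0 < x i) ∧ sig S c x < 0}

/-- `(f|_F)⁻¹(ℝ_{<0})`. -/
def negSetOn {n : ℕ} (S : Finset (Fin n → ℝ)) (c : (Fin n → ℝ) → ℝ)
    (F : Set (Fin n → ℝ)) : Set (Fin n → ℝ) :=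
  {x | (∀ i, 0 < x i) ∧ sigOn S c F x < 0}

/-- `σ₊(f)`: the positive exponent vectors. -/
def sigPosSupp {n : ℕ} (S : Finset (Fin n → ℝ)) (c : (Fin n → ℝ) → ℝ) : Set (Fin n → ℝ) :=
  {μ | μ ∈ S ∧ 0 < c μ}

/-- `σ₋(f)`: the negative exponent vectors. -/
def sigNegSupp {n : ℕ} (S : Finset (Fin n → ℝ)) (c : (Fin n → ℝ) → ℝ) : Set (Fin n → ℝ) :=
  {μ | μ ∈ S ∧ c μ < 0}

/-- The hyperplane `H_{v,a}`. -/
def Hyp {n : ℕ} (v : Fin n → ℝ) (a : ℝ) : Set (Fin n → ℝ) :=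
  {μ | ∑ i, v i * μ i = a}

/-- The closed half-space `H⁺_{v,a}`. -/
def Hplus {n : ℕ} (v : Fin n → ℝ) (a : ℝ) : Set (Fin n → ℝ) :=
  {μ | a ≤ ∑ i, v i * μ i}

/-- The closed half-space `H⁻_{v,a}`. -/
def Hminus {n : ℕ} (v : Fin n → ℝ) (a : ℝ) : Set (Fin n → ℝ) :=
  {μ | ∑ i, v i * μ i ≤ a}

/-- The open half-space `H^{+,∘}_{v,a}`. -/
def HplusO {n : ℕ} (v : Fin n → ℝ) (a : ℝ) : Set (Fin n → ℝ) :=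
  {μ | a < ∑ i, v i * μ i}

/-- The open half-space `H^{-,∘}_{v,a}`. -/
def HminusO {n : ℕ} (v : Fin n → ℝ) (a : ℝ) : Set (Fin n → ℝ) :=
  {μ | ∑ i, v i * μ i < a}

/-- `U` is a connected component of `X` (a maximal nonempty preconnected subset of `X`). -/
def IsConnComp {n : ℕ} (X U : Set (Fin n → ℝ)) : Prop :=
  U.Nonempty ∧ U ⊆ X ∧ IsPreconnected U ∧
    ∀ W, U ⊆ W → W ⊆ X → IsPreconnected W → W = U

/-- The number (cardinality) of connected components of `X`. -/
noncomputable def compCard {n : ℕ} (X : Set (Fin n → ℝ)) : Cardinal :=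
  Cardinal.mk {U : Set (Fin n → ℝ) // IsConnComp X U}

/-- The face `N(f)_v` of the Newton polytope of a signomial with support `S`,
with outer normal vector `v`. -/
def faceOf {n : ℕ} (S : Finset (Fin n → ℝ)) (v : Fin n → ℝ) : Set (Fin n → ℝ) :=
  {ω ∈ convexHull ℝ (↑S : Set (Fin n → ℝ)) |
    ∀ μ ∈ convexHull ℝ (↑S : Set (Fin n → ℝ)), ∑ i, v i * μ i ≤ ∑ i, v i * ω i}


section AuxStmt14
variable {n : ℕ}

def dotv (v μ : Fin n → ℝ) : ℝ := ∑ i, v i * μ i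

noncomputable def scl (v : Fin n → ℝ) (t : ℝ) (x : Fin n → ℝ) : Fin n → ℝ :=
  fun i => x i * t ^ v i

def PosOrth (n : ℕ) : Set (Fin n → ℝ) := {x | ∀ i, 0 < x i}


lemma isConnComp_connectedComponentIn {X : Set (Fin n → ℝ)} {x : Fin n → ℝ} (hx : x ∈ X) :
    IsConnComp X (connectedComponentIn X x) := by
  refine ⟨⟨x, mem_connectedComponentIn hx⟩, connectedComponentIn_subset X x,
    isPreconnected_connectedComponentIn, fun W hUW hWX hW => ?_⟩
  exact subset_antisymm (hW.subset_connectedComponentIn (hUW (mem_connectedComponentIn hx)) hWX) hUW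

lemma compCard_eq_one_iff {X : Set (Fin n → ℝ)} :
    compCard X = 1 ↔ X.Nonempty ∧ IsPreconnected X := by
  rw [compCard, Cardinal.eq_one_iff_unique]
  constructor
  · rintro ⟨hsub, ⟨U, hU⟩⟩
    have hXU : X = U := by
      apply subset_antisymm
      · intro x hx
        have h1 := isConnComp_connectedComponentIn hx
        have h2 : (⟨_, h1⟩ : {V // IsConnComp X V}) = ⟨U, hU⟩ := Subsingleton.elim _ _
        have h3 := congrArg Subtype.val h2
        simp only at h3
        rw [← h3]; exact mem_connectedComponentIn hx
      · exact hU.2.1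
    refine ⟨?_, ?_⟩
    · rw [hXU]; exact hU.1
    · rw [hXU]; exact hU.2.2.1
  · rintro ⟨hne, hpc⟩
    have hXcomp : IsConnComp X X :=
      ⟨hne, subset_rfl, hpc, fun W hXW hWX _ => subset_antisymm hWX hXW⟩
    refine ⟨⟨fun U V => ?_⟩, ⟨⟨X, hXcomp⟩⟩⟩
    obtain ⟨-, hUX, -, hUmax⟩ := U.2
    obtain ⟨-, hVX, -, hVmax⟩ := V.2
    have hU : X = U.1 := hUmax X hUX subset_rfl hpc
    have hV : X = V.1 := hVmax X hVX subset_rfl hpc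
    exact Subtype.ext (hU ▸ hV)

lemma scl_one (v x : Fin n → ℝ) : scl v 1 x = x := by
  funext i; simp [scl]

lemma scl_pos {v : Fin n → ℝ} {t : ℝ} (ht : 0 < t) {x : Fin n → ℝ}
    (hx : ∀ i, 0 < x i) : ∀ i, 0 < scl v t x i :=
  fun i => mul_pos (hx i) (Real.rpow_pos_of_pos ht _)

lemma prod_scl {v : Fin n → ℝ} {t : ℝ} (ht : 0 < t) {x : Fin n → ℝ}
    (hx : ∀ i, 0 < x i) (μ : Fin n → ℝ) :
    ∏ i, (scl v t x i) ^ μ i = t ^ dotv v μ * ∏ i, x i ^ μ i := by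
  rw [dotv, Real.rpow_sum_of_pos ht, ← Finset.prod_mul_distrib]
  apply Finset.prod_congr rfl
  intro i _
  rw [scl, Real.mul_rpow (hx i).le (Real.rpow_pos_of_pos ht _).le,
    ← Real.rpow_mul ht.le, mul_comm (t ^ (v i * μ i))]

lemma sig_scl {S : Finset (Fin n → ℝ)} {c : (Fin n → ℝ) → ℝ} {v : Fin n → ℝ}
    {t : ℝ} (ht : 0 < t) {x : Fin n → ℝ} (hx : ∀ i, 0 < x i) :
    sig S c (scl v t x) = ∑ μ ∈ S, t ^ dotv v μ * (c μ * ∏ i, x i ^ μ i) := by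
  unfold sig
  apply Finset.sum_congr rfl
  intro μ _
  rw [prod_scl ht hx μ]; ring

lemma sig_scl_const {S : Finset (Fin n → ℝ)} {c : (Fin n → ℝ) → ℝ} {v : Fin n → ℝ}
    {a t : ℝ} (ht : 0 < t) {x : Fin n → ℝ} (hx : ∀ i, 0 < x i)
    (h : ∀ μ ∈ S, dotv v μ = a) :
    sig S c (scl v t x) = t ^ a * sig S c x := by
  rw [sig_scl ht hx, sig, Finset.mul_sum]
  exact Finset.sum_congr rfl fun μ hμ => by rw [h μ hμ]

lemma two_term_mono {a b A B t t' : ℝ} (hab : b < a) (hA : A < 0) (ht : 0 < t)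
    (htt' : t ≤ t') (h : t ^ a * A + t ^ b * B < 0) : t' ^ a * A + t' ^ b * B < 0 := by
  have ht' : 0 < t' := ht.trans_le htt'
  have hsplit : ∀ s : ℝ, 0 < s → s ^ a * A + s ^ b * B = s ^ b * (s ^ (a - b) * A + B) := by
    intro s hs
    rw [mul_add, ← mul_assoc, ← Real.rpow_add hs, show b + (a - b) = a by ring]
  rw [hsplit t ht] at h
  rw [hsplit t' ht']
  have hb : (0:ℝ) < t ^ b := Real.rpow_pos_of_pos ht _
  have h1 : t ^ (a - b) * A + B < 0 := by
    by_contra hcon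
    push_neg at hcon
    nlinarith
  have h2 : t ^ (a - b) ≤ t' ^ (a - b) :=
    Real.rpow_le_rpow ht.le htt' (sub_nonneg.2 hab.le)
  have h3 : t' ^ (a - b) * A ≤ t ^ (a - b) * A := mul_le_mul_of_nonpos_right h2 hA.le
  exact mul_neg_of_pos_of_neg (Real.rpow_pos_of_pos ht' _) (by linarith)

lemma dom_exists {ι : Type*} (T : Finset ι) (e g : ι → ℝ) (i₀ : ι) (hi₀ : i₀ ∈ T)
    (hg : g i₀ < 0) (hlt : ∀ i ∈ T, i ≠ i₀ → e i < e i₀) :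
    ∃ s₀ : ℝ, 1 ≤ s₀ ∧ ∀ s, s₀ ≤ s → ∑ i ∈ T, s ^ e i * g i < 0 := by
  classical
  have hten : Filter.Tendsto (fun s : ℝ => ∑ i ∈ T, s ^ (e i - e i₀) * g i) Filter.atTop
      (nhds (g i₀)) := by
    have h0 : g i₀ = ∑ i ∈ T, (if i = i₀ then g i₀ else 0) := by
      rw [Finset.sum_ite_eq' T i₀ (fun _ => g i₀), if_pos hi₀]
    rw [h0]
    apply tendsto_finset_sum
    intro i hi
    by_cases h : i = i₀
    · subst h
      simp only [if_pos rfl, sub_self]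
      have : (fun s : ℝ => s ^ (0:ℝ) * g i) = fun _ => g i := by
        funext s; rw [Real.rpow_zero, one_mul]
      rw [this]; exact tendsto_const_nhds
    · simp only [if_neg h]
      have he : 0 < e i₀ - e i := sub_pos.2 (hlt i hi h)
      have := (tendsto_rpow_neg_atTop he).mul_const (g i)
      simpa [neg_sub] using this
  have hev : ∀ᶠ s in Filter.atTop, (∑ i ∈ T, s ^ (e i - e i₀) * g i) < 0 :=
    hten.eventually_lt_const hg
  obtain ⟨s₀, hs₀⟩ := Filter.eventually_atTop.1 hev
  refine ⟨max s₀ 1, le_max_right _ _, fun s hs => ?_⟩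
  have hs1 : (1:ℝ) ≤ s := (le_max_right _ _).trans hs
  have hspos : 0 < s := zero_lt_one.trans_le hs1
  have hsum := hs₀ s ((le_max_left _ _).trans hs)
  have key : ∑ i ∈ T, s ^ e i * g i = s ^ e i₀ * ∑ i ∈ T, s ^ (e i - e i₀) * g i := by
    rw [Finset.mul_sum]
    refine Finset.sum_congr rfl fun i _ => ?_
    rw [← mul_assoc, ← Real.rpow_add hspos, show e i₀ + (e i - e i₀) = e i by ring]
  rw [key]
  exact mul_neg_of_pos_of_neg (Real.rpow_pos_of_pos hspos _) hsum

lemma two_term_exists {a b A B : ℝ} (hab : b < a) (hA : A < 0) :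
    ∃ t₀ : ℝ, 1 ≤ t₀ ∧ ∀ t, t₀ ≤ t → t ^ a * A + t ^ b * B < 0 := by
  obtain ⟨t₀, ht₀, h⟩ := dom_exists (Finset.univ : Finset (Fin 2)) ![a, b] ![A, B] 0
    (Finset.mem_univ _) hA (by
      intro i _ hi
      fin_cases i
      · exact absurd rfl hi
      · exact hab)
  refine ⟨t₀, ht₀, fun t ht => ?_⟩
  have := h t ht
  rwa [Fin.sum_univ_two] at this

lemma continuousOn_sig {S : Finset (Fin n → ℝ)} {c : (Fin n → ℝ) → ℝ} :
    ContinuousOn (sig S c) (PosOrth n) := by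
  intro x hx
  apply ContinuousAt.continuousWithinAt
  have h : ∀ μ ∈ S, Filter.Tendsto (fun y : Fin n → ℝ => c μ * ∏ i, y i ^ μ i)
      (nhds x) (nhds (c μ * ∏ i, x i ^ μ i)) := by
    intro μ _
    apply Filter.Tendsto.const_mul
    apply tendsto_finset_prod
    intro i _
    exact ((continuous_apply i).continuousAt).rpow_const (Or.inl (hx i).ne')
  exact tendsto_finset_sum S h

lemma isOpen_PosOrth : IsOpen (PosOrth n) := by
  have h : PosOrth n = ⋂ i, (fun x : Fin n → ℝ => x i) ⁻¹' Set.Ioi (0:ℝ) := by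
    ext x; simp [PosOrth, Set.mem_iInter]
  rw [h]
  exact isOpen_iInter_of_finite fun i => (continuous_apply i).isOpen_preimage _ isOpen_Ioi

lemma isOpen_negSet {S : Finset (Fin n → ℝ)} {c : (Fin n → ℝ) → ℝ} :
    IsOpen (negSet S c) := by
  have h : negSet S c = PosOrth n ∩ (sig S c) ⁻¹' Set.Iio 0 := rfl
  rw [h]
  exact continuousOn_sig.isOpen_inter_preimage isOpen_PosOrth isOpen_Iio

lemma continuous_scl (v : Fin n → ℝ) (T : ℝ) :
    Continuous (fun y : Fin n → ℝ => scl v T y) :=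
  continuous_pi fun i => ((continuous_apply i).mul continuous_const)

lemma joinedIn_scl {N : Set (Fin n → ℝ)} {v : Fin n → ℝ} {T : ℝ} (hT : 1 ≤ T)
    {x : Fin n → ℝ} (h : ∀ t, t ∈ Set.Icc (1:ℝ) T → scl v t x ∈ N) :
    JoinedIn N x (scl v T x) := by
  have hσ : ∀ u : unitInterval, (1:ℝ) + u * (T - 1) ∈ Set.Icc (1:ℝ) T := by
    intro u
    constructor
    · nlinarith [u.2.1, u.2.2]
    · nlinarith [u.2.1, u.2.2]
  have hσpos : ∀ u : unitInterval, (0:ℝ) < 1 + u * (T - 1) :=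
    fun u => zero_lt_one.trans_le (hσ u).1
  refine ⟨⟨⟨fun u => scl v (1 + u * (T - 1)) x, ?_⟩, ?_, ?_⟩, fun u => h _ (hσ u)⟩
  · apply continuous_pi
    intro i
    apply Continuous.mul continuous_const
    have hc : Continuous fun u : unitInterval => (1:ℝ) + u * (T - 1) := by continuity
    exact hc.rpow_const fun u => Or.inl (hσpos u).ne'
  · simp only [Set.Icc.coe_zero, zero_mul, add_zero, scl_one]
  · simp only [Set.Icc.coe_one, one_mul]
    rw [show (1:ℝ) + (T - 1) = T by ring]

lemma bridge {S₁ S₂ : Finset (Fin n → ℝ)} {c : (Fin n → ℝ) → ℝ} {v : Fin n → ℝ} {a b : ℝ}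
    (hab : b < a) (hdisj : Disjoint S₁ S₂)
    (ha : ∀ μ ∈ S₁, dotv v μ = a) (hb : ∀ μ ∈ S₂, dotv v μ = b)
    (hA₁ : IsPreconnected (negSet S₁ c))
    {z x : Fin n → ℝ} (hz1 : z ∈ negSet S₁ c) (hz2 : sig S₂ c z < 0)
    (hx : x ∈ negSet (S₁ ∪ S₂) c) (hx1 : sig S₁ c x < 0) :
    JoinedIn (negSet (S₁ ∪ S₂) c) x z := by
  classical
  set N := negSet (S₁ ∪ S₂) c with hN
  set A := negSet S₁ c with hA
  have fsum : ∀ y : Fin n → ℝ, sig (S₁ ∪ S₂) c y = sig S₁ c y + sig S₂ c y :=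
    fun y => Finset.sum_union hdisj
  have fscl : ∀ (t : ℝ), 0 < t → ∀ y : Fin n → ℝ, (∀ i, 0 < y i) →
      sig (S₁ ∪ S₂) c (scl v t y) = t ^ a * sig S₁ c y + t ^ b * sig S₂ c y := by
    intro t ht y hy
    rw [fsum, sig_scl_const ht hy ha, sig_scl_const ht hy hb]
  -- membership of scaled points for y with sig S₁ c y < 0 and sig(S₁∪S₂) c (scl v s y) < 0
  have mono : ∀ (y : Fin n → ℝ), (∀ i, 0 < y i) → sig S₁ c y < 0 →
      ∀ s t : ℝ, 0 < s → s ≤ t → sig (S₁ ∪ S₂) c (scl v s y) < 0 →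
        scl v t y ∈ N := by
    intro y hy hy1 s t hs hst hneg
    have ht : 0 < t := hs.trans_le hst
    refine ⟨scl_pos ht hy, ?_⟩
    rw [fscl t ht y hy]
    rw [fscl s hs y hy] at hneg
    exact two_term_mono hab hy1 hs hst hneg
  have hzN : z ∈ N := ⟨hz1.1, by rw [fsum]; linarith [hz1.2]⟩
  have hxA : x ∈ A := ⟨hx.1, hx1⟩
  -- path in A from x to z
  have hconn : IsConnected A := ⟨⟨z, hz1⟩, hA₁⟩
  have hpc : IsPathConnected A := (isOpen_negSet.isConnected_iff_isPathConnected).mp hconn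
  obtain ⟨γ, hγ⟩ := hpc.joinedIn x hxA z hz1
  have hK : IsCompact (Set.range γ) := isCompact_range γ.continuous
  -- uniform T
  have existsT : ∀ y ∈ A, ∃ t₀ : ℝ, 1 ≤ t₀ ∧ ∀ t, t₀ ≤ t →
      sig (S₁ ∪ S₂) c (scl v t y) < 0 := by
    intro y hy
    obtain ⟨t₀, ht₀, hspec⟩ := two_term_exists (A := sig S₁ c y) (B := sig S₂ c y) hab hy.2
    refine ⟨t₀, ht₀, fun t ht => ?_⟩
    rw [fscl t (zero_lt_one.trans_le (ht₀.trans ht)) y hy.1]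
    exact hspec t ht
  have hUopen : ∀ t : ℝ, IsOpen (A ∩ (fun y => scl v (max t 1) y) ⁻¹' N) := by
    intro t
    exact isOpen_negSet.inter ((continuous_scl v (max t 1)).isOpen_preimage _ isOpen_negSet)
  have hcover : Set.range γ ⊆ ⋃ t : ℝ, A ∩ (fun y => scl v (max t 1) y) ⁻¹' N := by
    intro y hy
    obtain ⟨u, rfl⟩ := hy
    have hyA : γ u ∈ A := hγ u
    obtain ⟨t₀, ht₀, hspec⟩ := existsT (γ u) hyA
    refine Set.mem_iUnion.2 ⟨t₀, hyA, ?_⟩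
    show scl v (max t₀ 1) (γ u) ∈ N
    rw [max_eq_left ht₀]
    exact ⟨scl_pos (zero_lt_one.trans_le ht₀) hyA.1, hspec t₀ le_rfl⟩
  obtain ⟨tt, htt⟩ := hK.elim_finite_subcover _ hUopen hcover
  set T : ℝ := (insert (1:ℝ) (tt.image fun t => max t 1)).max' (by simp) with hTdef
  have hT1 : 1 ≤ T := Finset.le_max' _ _ (Finset.mem_insert_self _ _)
  have hTbig : ∀ t ∈ tt, max t 1 ≤ T := by
    intro t ht
    rw [hTdef]
    exact Finset.le_max' (insert (1:ℝ) (tt.image fun t => max t 1)) _ (Finset.mem_insert_of_mem (Finset.mem_image_of_mem _ ht))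
  have hTgood : ∀ y ∈ Set.range γ, scl v T y ∈ N := by
    intro y hy
    have h0 := htt hy
    simp only [Set.mem_iUnion, Set.mem_inter_iff, Set.mem_preimage] at h0
    obtain ⟨t, htmem, hyA, hyU⟩ := h0
    exact mono y hyA.1 hyA.2 (max t 1) T (zero_lt_one.trans_le (le_max_right _ _))
      (hTbig t htmem) hyU.2
  have hxmem : ∀ t ∈ Set.Icc (1:ℝ) T, scl v t x ∈ N := by
    intro t ht
    exact mono x hx.1 hx1 1 t zero_lt_one ht.1 (by rw [scl_one]; exact hx.2)
  have P1 : JoinedIn N x (scl v T x) := joinedIn_scl hT1 hxmem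
  have hzmem : ∀ t ∈ Set.Icc (1:ℝ) T, scl v t z ∈ N := by
    intro t ht
    exact mono z hz1.1 hz1.2 1 t zero_lt_one ht.1 (by rw [scl_one]; exact hzN.2)
  have P3 : JoinedIn N z (scl v T z) := joinedIn_scl hT1 hzmem
  have P2 : JoinedIn N (scl v T x) (scl v T z) := by
    refine ⟨γ.map (continuous_scl v T), fun u => ?_⟩
    simp only [Path.map_coe, Function.comp_apply]
    exact hTgood (γ u) ⟨u, rfl⟩
  exact (P1.trans P2).trans P3.symm

lemma dotv_comb (v y z : Fin n → ℝ) (p q : ℝ) :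
    dotv v (p • y + q • z) = p * dotv v y + q * dotv v z := by
  simp only [dotv, Pi.add_apply, Pi.smul_apply, smul_eq_mul, mul_add,
    Finset.sum_add_distrib, Finset.mul_sum]
  congr 1 <;> exact Finset.sum_congr rfl fun i _ => by ring

lemma dotv_neg (v μ : Fin n → ℝ) : dotv (-v) μ = - dotv v μ := by
  simp [dotv, Finset.sum_neg_distrib]

/-- uniqueness of the maximizer of `dotv w` among support points on one of the parallel
hyperplanes -/
lemma max_unique {S : Finset (Fin n → ℝ)} {v w β₁ β₂ : Fin n → ℝ}
    (hβ₁S : β₁ ∈ S)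
    (hface : convexHull ℝ {β₁, β₂} = faceOf S w)
    (hne : dotv v β₁ ≠ dotv v β₂)
    {μ : Fin n → ℝ} (hμS : μ ∈ S) (hμ : dotv v μ = dotv v β₁) (hμne : μ ≠ β₁) :
    dotv w μ < dotv w β₁ := by
  have hβ₁w : β₁ ∈ faceOf S w := by
    rw [← hface]
    exact subset_convexHull ℝ _ (Set.mem_insert _ _)
  have hμhull : μ ∈ convexHull ℝ (↑S : Set (Fin n → ℝ)) :=
    subset_convexHull ℝ _ (Finset.mem_coe.2 hμS)
  have hle : dotv w μ ≤ dotv w β₁ := hβ₁w.2 μ hμhull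
  rcases lt_or_eq_of_le hle with h | heq
  · exact h
  · exfalso
    have hμw : μ ∈ faceOf S w :=
      ⟨hμhull, fun ν hν => le_trans (hβ₁w.2 ν hν) (le_of_eq heq.symm)⟩
    rw [← hface, convexHull_pair] at hμw
    obtain ⟨p, q, hp, hq, hpq, hcomb⟩ := hμw
    have hval : dotv v μ = p * dotv v β₁ + q * dotv v β₂ := by
      rw [← hcomb, dotv_comb]
    have hq0 : q * (dotv v β₂ - dotv v β₁) = 0 := by
      have hp' : p = 1 - q := by linarith
      rw [hp'] at hval
      rw [hμ] at hval
      ring_nf at hval ⊢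
      linarith
    rcases mul_eq_zero.1 hq0 with h | h
    · apply hμne
      rw [← hcomb, h, show p = 1 by linarith]
      simp
    · exact hne (by linarith)

lemma edge_z {S S₁ S₂ : Finset (Fin n → ℝ)} {c : (Fin n → ℝ) → ℝ} {v w β₁ β₂ : Fin n → ℝ}
    (hS₁ : S₁ ⊆ S) (hS₂ : S₂ ⊆ S) (hβ₁S : β₁ ∈ S₁) (hβ₂S : β₂ ∈ S₂)
    (hc₁ : c β₁ < 0) (hc₂ : c β₂ < 0)
    (hface : convexHull ℝ {β₁, β₂} = faceOf S w)
    (ha : ∀ μ ∈ S₁, dotv v μ = dotv v β₁) (hb : ∀ μ ∈ S₂, dotv v μ = dotv v β₂)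
    (hab : dotv v β₂ < dotv v β₁) :
    ∃ z : Fin n → ℝ, (∀ i, 0 < z i) ∧ sig S₁ c z < 0 ∧ sig S₂ c z < 0 := by
  set x₀ : Fin n → ℝ := fun _ => 1 with hx₀
  have hx₀pos : ∀ i, 0 < x₀ i := fun i => one_pos
  have hgval : ∀ μ : Fin n → ℝ, c μ * ∏ i, x₀ i ^ μ i = c μ := by
    intro μ
    simp [hx₀, Real.one_rpow]
  have hface2 : convexHull ℝ {β₂, β₁} = faceOf S w := by
    rwa [Set.pair_comm]
  obtain ⟨s₁, hs₁, H₁⟩ := dom_exists S₁ (dotv w) (fun μ => c μ * ∏ i, x₀ i ^ μ i) β₁ hβ₁S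
    (by show c β₁ * ∏ i, x₀ i ^ β₁ i < 0; rw [hgval β₁]; exact hc₁)
    (fun μ hμ hne => max_unique (hS₁ hβ₁S) hface hab.ne' (hS₁ hμ) (ha μ hμ) hne)
  obtain ⟨s₂, hs₂, H₂⟩ := dom_exists S₂ (dotv w) (fun μ => c μ * ∏ i, x₀ i ^ μ i) β₂ hβ₂S
    (by show c β₂ * ∏ i, x₀ i ^ β₂ i < 0; rw [hgval β₂]; exact hc₂)
    (fun μ hμ hne => max_unique (hS₂ hβ₂S) hface2 hab.ne (hS₂ hμ) (hb μ hμ) hne)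
  set s : ℝ := max s₁ s₂ with hs
  have hspos : (0:ℝ) < s := zero_lt_one.trans_le (hs₁.trans (le_max_left _ _))
  refine ⟨scl w s x₀, scl_pos hspos hx₀pos, ?_, ?_⟩
  · rw [sig_scl hspos hx₀pos]
    exact H₁ s (le_max_left _ _)
  · rw [sig_scl hspos hx₀pos]
    exact H₂ s (le_max_right _ _)



lemma sigOn_eq (S : Finset (Fin n → ℝ)) (c : (Fin n → ℝ) → ℝ) (F : Set (Fin n → ℝ))
    [DecidablePred (· ∈ F)] : sigOn S c F = sig (S.filter (fun μ => μ ∈ F)) c := by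
  funext x
  rw [sigOn, sig, Finset.sum_filter]
  exact Finset.sum_congr rfl fun μ _ => by congr

lemma negSetOn_eq (S : Finset (Fin n → ℝ)) (c : (Fin n → ℝ) → ℝ) (F : Set (Fin n → ℝ))
    [DecidablePred (· ∈ F)] : negSetOn S c F = negSet (S.filter (fun μ => μ ∈ F)) c := by
  unfold negSetOn negSet
  rw [sigOn_eq]

end AuxStmt14

/-- Theorem 3.6: if the support lies on two parallel faces, each restriction has exactly one
negative connected component, and there is an edge of the Newton polytope joining a negative
exponent vector on one face to a negative exponent vector on the other, then `f⁻¹(ℝ_{<0})`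
has exactly one connected component. (An edge is a one-dimensional face; since
`Conv({β₁, β₂})` is one-dimensional iff `β₁ ≠ β₂`, being an edge is expressed as being a
face together with `β₁ ≠ β₂`.) -/
theorem stmt_14 (n : ℕ) (S : Finset (Fin n → ℝ)) (c : (Fin n → ℝ) → ℝ)
    (hc : ∀ μ ∈ S, c μ ≠ 0)
    (v : Fin n → ℝ)
    (hcov : (↑S : Set (Fin n → ℝ)) ⊆ faceOf S v ∪ faceOf S (-v))
    (h1 : compCard (negSetOn S c (faceOf S v)) = 1)
    (h2 : compCard (negSetOn S c (faceOf S (-v))) = 1)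
    (β₁ β₂ : Fin n → ℝ)
    (hβ₁ : β₁ ∈ sigNegSupp S c ∩ faceOf S v)
    (hβ₂ : β₂ ∈ sigNegSupp S c ∩ faceOf S (-v))
    (hne : β₁ ≠ β₂)
    (hedge : ∃ w : Fin n → ℝ, convexHull ℝ {β₁, β₂} = faceOf S w) :
    compCard (negSet S c) = 1 := by
  classical
  obtain ⟨⟨hβ₁S, hcβ₁⟩, hβ₁F⟩ := hβ₁
  obtain ⟨⟨hβ₂S, hcβ₂⟩, hβ₂F⟩ := hβ₂
  have hullMem : ∀ μ ∈ S, μ ∈ convexHull ℝ (↑S : Set (Fin n → ℝ)) :=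
    fun μ hμ => subset_convexHull ℝ _ (Finset.mem_coe.2 hμ)
  have hval₁ : ∀ μ ∈ S, μ ∈ faceOf S v → dotv v μ = dotv v β₁ := by
    intro μ hμ hF
    exact le_antisymm (hβ₁F.2 μ (hullMem μ hμ)) (hF.2 β₁ (hullMem β₁ hβ₁S))
  have hval₂ : ∀ μ ∈ S, μ ∈ faceOf S (-v) → dotv v μ = dotv v β₂ := by
    intro μ hμ hF
    have h1 : dotv (-v) μ ≤ dotv (-v) β₂ := hβ₂F.2 μ (hullMem μ hμ)
    have h2 : dotv (-v) β₂ ≤ dotv (-v) μ := hF.2 β₂ (hullMem β₂ hβ₂S)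
    rw [dotv_neg, dotv_neg] at h1 h2
    linarith
  have hba : dotv v β₂ ≤ dotv v β₁ := hβ₁F.2 β₂ (hullMem β₂ hβ₂S)
  rcases eq_or_lt_of_le hba with heq | hlt
  · -- degenerate case: all of S on one hyperplane
    have hall : ∀ μ ∈ S, dotv v μ = dotv v β₁ := by
      intro μ hμ
      rcases hcov (Finset.mem_coe.2 hμ) with h | h
      · exact hval₁ μ hμ h
      · rw [hval₂ μ hμ h]; exact heq
    have hlin : IsLinearMap ℝ (fun μ : Fin n → ℝ => dotv v μ) := by
      constructor
      · intro p q; simp [dotv, mul_add, Finset.sum_add_distrib]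
      · intro r p
        simp only [dotv, Pi.smul_apply, smul_eq_mul, Finset.mul_sum]
        exact Finset.sum_congr rfl fun i _ => by ring
    have hhalf : convexHull ℝ (↑S : Set (Fin n → ℝ)) ⊆
        {ω : Fin n → ℝ | dotv v ω ≤ dotv v β₁} :=
      convexHull_min (fun μ hμ => le_of_eq (hall μ (Finset.mem_coe.1 hμ)))
        (convex_halfSpace_le hlin _)
    have hSF : ∀ μ ∈ S, μ ∈ faceOf S v := by
      intro μ hμ
      exact ⟨hullMem μ hμ, fun ν hν => le_trans (hhalf hν) (le_of_eq (hall μ hμ).symm)⟩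
    rw [negSetOn_eq, Finset.filter_true_of_mem hSF] at h1
    exact h1
  · -- main case
    set S₁ := S.filter (fun μ => μ ∈ faceOf S v) with hS₁def
    set S₂ := S.filter (fun μ => μ ∈ faceOf S (-v)) with hS₂def
    have ha' : ∀ μ ∈ S₁, dotv v μ = dotv v β₁ :=
      fun μ hμ => hval₁ μ (Finset.mem_filter.1 hμ).1 (Finset.mem_filter.1 hμ).2
    have hb' : ∀ μ ∈ S₂, dotv v μ = dotv v β₂ :=
      fun μ hμ => hval₂ μ (Finset.mem_filter.1 hμ).1 (Finset.mem_filter.1 hμ).2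
    have hdisj : Disjoint S₁ S₂ := by
      rw [Finset.disjoint_left]
      intro μ hμ1 hμ2
      exact hlt.ne' ((ha' μ hμ1).symm.trans (hb' μ hμ2))
    have hunion : S₁ ∪ S₂ = S := by
      apply subset_antisymm
        (Finset.union_subset (Finset.filter_subset _ _) (Finset.filter_subset _ _))
      intro μ hμ
      rcases hcov (Finset.mem_coe.2 hμ) with h | h
      · exact Finset.mem_union_left _ (Finset.mem_filter.2 ⟨hμ, h⟩)
      · exact Finset.mem_union_right _ (Finset.mem_filter.2 ⟨hμ, h⟩)
    have hβ₁S₁ : β₁ ∈ S₁ := Finset.mem_filter.2 ⟨hβ₁S, hβ₁F⟩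
    have hβ₂S₂ : β₂ ∈ S₂ := Finset.mem_filter.2 ⟨hβ₂S, hβ₂F⟩
    rw [negSetOn_eq, ← hS₁def] at h1
    rw [negSetOn_eq, ← hS₂def] at h2
    obtain ⟨h1ne, h1pc⟩ := compCard_eq_one_iff.1 h1
    obtain ⟨h2ne, h2pc⟩ := compCard_eq_one_iff.1 h2
    obtain ⟨w, hw⟩ := hedge
    obtain ⟨z, hzpos, hz1, hz2⟩ := edge_z (Finset.filter_subset _ _) (Finset.filter_subset _ _)
      hβ₁S₁ hβ₂S₂ hcβ₁ hcβ₂ hw ha' hb' hlt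
    have hNeq : negSet (S₁ ∪ S₂) c = negSet S c := by rw [hunion]
    have hsum : ∀ y, sig S c y = sig S₁ c y + sig S₂ c y := by
      intro y
      rw [← hunion]
      exact Finset.sum_union hdisj
    have hz1' : z ∈ negSet S₁ c := ⟨hzpos, hz1⟩
    have hz2' : z ∈ negSet S₂ c := ⟨hzpos, hz2⟩
    have hzN : z ∈ negSet S c := ⟨hzpos, by rw [hsum z]; linarith⟩
    have hb'' : ∀ μ ∈ S₁, dotv (-v) μ = -dotv v β₁ :=
      fun μ hμ => by rw [dotv_neg, ha' μ hμ]
    have ha'' : ∀ μ ∈ S₂, dotv (-v) μ = -dotv v β₂ :=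
      fun μ hμ => by rw [dotv_neg, hb' μ hμ]
    have hjoin : ∀ x ∈ negSet S c, JoinedIn (negSet S c) x z := by
      intro x hx
      have hx12 : sig S₁ c x + sig S₂ c x < 0 := by rw [← hsum x]; exact hx.2
      by_cases hx1 : sig S₁ c x < 0
      · have hxU : x ∈ negSet (S₁ ∪ S₂) c := by rw [hNeq]; exact hx
        have hbr := bridge hlt hdisj ha' hb' h1pc hz1' hz2 hxU hx1
        rwa [hNeq] at hbr
      · have hx2 : sig S₂ c x < 0 := by push_neg at hx1; linarith
        have hNeq' : negSet (S₂ ∪ S₁) c = negSet S c := by rw [Finset.union_comm, hunion]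
        have hxU : x ∈ negSet (S₂ ∪ S₁) c := by rw [hNeq']; exact hx
        have hbr := bridge (neg_lt_neg hlt) hdisj.symm ha'' hb'' h2pc hz2' hz1 hxU hx2
        rwa [hNeq'] at hbr
    rw [compCard_eq_one_iff]
    refine ⟨⟨z, hzN⟩, ?_⟩
    have hpc : IsPathConnected (negSet S c) :=
      ⟨z, hzN, fun {y} hy => (hjoin y hy).symm⟩
    exact hpc.isConnected.isPreconnected
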